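/- Let {A₁,…,A_r} be a pairwise orthogonal set (in Hilbert–Schmidt inner product) of complex matrices of the same size satisfying ‖Σᵢ Aᵢ‖₁ = Σᵢ ‖Aᵢ‖₁. Then AᵢAⱼ* = 0 and Aᵢ*Aⱼ = 0 for all i ≠ j. -/

import Mathlib

open Matrix Kronecker BigOperators ComplexOrder

noncomputable section

/-- The positive semidefinite square root of a positive semidefinite matrix
(the definition removed from Mathlib, restored with its old value). -/
noncomputable def Matrix.PosSemidef.sqrt {n 𝕜 : Type*} [Fintype n] [DecidableEq n] [RCLike 𝕜]
    {A : Matrix n n 𝕜} (hA : A.PosSemidef) : Matrix n n 𝕜 :=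
  hA.1.eigenvectorUnitary.1 * diagonal ((↑) ∘ (Real.sqrt ∘ hA.1.eigenvalues)) *
    (star hA.1.eigenvectorUnitary : Matrix n n 𝕜)

theorem Matrix.PosSemidef.posSemidef_sqrt {n : Type*} [Fintype n] [DecidableEq n]
    {A : Matrix n n ℂ} (hA : A.PosSemidef) : hA.sqrt.PosSemidef := by
  unfold Matrix.PosSemidef.sqrt
  rw [Matrix.star_eq_conjTranspose]
  refine (Matrix.PosSemidef.diagonal ?_).mul_mul_conjTranspose_same _
  intro k
  exact (RCLike.ofReal_nonneg).mpr (Real.sqrt_nonneg _)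

theorem Matrix.PosSemidef.sqrt_mul_self {n : Type*} [Fintype n] [DecidableEq n]
    {A : Matrix n n ℂ} (hA : A.PosSemidef) : hA.sqrt * hA.sqrt = A := by
  have hs := hA.1.spectral_theorem
  rw [Unitary.conjStarAlgAut_apply] at hs
  unfold Matrix.PosSemidef.sqrt
  set U : Matrix n n ℂ := (hA.1.eigenvectorUnitary : Matrix n n ℂ) with hUdef
  set D : Matrix n n ℂ := diagonal ((↑) ∘ (Real.sqrt ∘ hA.1.eigenvalues)) with hDdef
  have hU : star U * U = 1 := Unitary.coe_star_mul_self _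
  calc U * D * star U * (U * D * star U) = U * (D * ((star U * U) * (D * star U))) := by
        simp only [Matrix.mul_assoc]
    _ = U * (D * D) * star U := by
        rw [hU, Matrix.one_mul]; simp only [Matrix.mul_assoc]
    _ = A := by
        rw [hDdef, diagonal_mul_diagonal]
        refine Eq.trans ?_ hs.symm
        refine congrArg (fun X => U * X * star U) (congrArg diagonal (funext fun k => ?_))
        show ((Real.sqrt (hA.1.eigenvalues k) : ℝ) : ℂ) * ((Real.sqrt (hA.1.eigenvalues k) : ℝ) : ℂ)
          = ((hA.1.eigenvalues k : ℝ) : ℂ)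
        rw [← Complex.ofReal_mul, Real.mul_self_sqrt (hA.eigenvalues_nonneg k)]

/-- Trace norm (sum of singular values) of a complex matrix. -/
noncomputable def traceNorm {l m : Type*} [Fintype l] [Fintype m] [DecidableEq m]
    (A : Matrix l m ℂ) : ℝ :=
  ((Matrix.posSemidef_conjTranspose_mul_self A).sqrt.trace).re

/-- Frobenius norm. -/
noncomputable def frobNorm {l m : Type*} [Fintype l] [Fintype m]
    (A : Matrix l m ℂ) : ℝ :=
  Real.sqrt ((Aᴴ * A).trace.re)

/-- Partial transpose on the first tensor factor. -/
def ptranspose {a b : Type*} (X : Matrix (a × b) (a × b) ℂ) : Matrix (a × b) (a × b) ℂ :=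
  Matrix.of fun p q => X (q.1, p.2) (p.1, q.2)

/-- Outer product `u v*`. -/
def outer {a : Type*} (u v : a → ℂ) : Matrix a a ℂ :=
  Matrix.of fun p q => u p * star (v q)

/-- Density operator: positive semidefinite with trace one. -/
def IsDensity {a : Type*} [Fintype a] (ρ : Matrix a a ℂ) : Prop :=
  ρ.PosSemidef ∧ ρ.trace = 1

/-- Maximally entangled unit vector in `ℂⁿ ⊗ ℂᵐ`. -/
def MaxEntangled (n m : ℕ) (u : Fin n × Fin m → ℂ) : Prop :=
  ∃ (x : Fin (min n m) → EuclideanSpace ℂ (Fin n))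
    (y : Fin (min n m) → EuclideanSpace ℂ (Fin m)),
    Orthonormal ℂ x ∧ Orthonormal ℂ y ∧
      ∀ p : Fin n × Fin m,
        u p = (1 / Real.sqrt (min n m) : ℝ) * ∑ i, x i p.1 * y i p.2

/-- Extension `Φ ⊗ I` of a matrix map to a system with ancilla `c`. -/
def tensorExt {a b c : Type*} [Fintype a] [DecidableEq a] [Fintype c]
    (Φ : Matrix a a ℂ →ₗ[ℂ] Matrix b b ℂ)
    (X : Matrix (a × c) (a × c) ℂ) : Matrix (b × c) (b × c) ℂ :=
  Matrix.of fun p q => Φ (Matrix.of fun i j => X (i, p.2) (j, q.2)) p.1 q.1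

/-- Quantum channel: completely positive and trace preserving. -/
def IsChannel {a b : Type*} [Fintype a] [DecidableEq a] [Fintype b]
    (Φ : Matrix a a ℂ →ₗ[ℂ] Matrix b b ℂ) : Prop :=
  (∀ X, (Φ X).trace = X.trace) ∧
    ∀ (k : ℕ) (X : Matrix (a × Fin k) (a × Fin k) ℂ),
      X.PosSemidef → (tensorExt Φ X).PosSemidef

/-- Partial trace over the second tensor factor. -/
def ptraceRight {a b : Type*} [Fintype b] (M : Matrix (a × b) (a × b) ℂ) :
    Matrix a a ℂ :=
  Matrix.of fun i k => ∑ c, M (i, c) (k, c)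

/-- Partial trace over the first tensor factor. -/
def ptraceLeft {a b : Type*} [Fintype a] (M : Matrix (a × b) (a × b) ℂ) :
    Matrix b b ℂ :=
  Matrix.of fun i k => ∑ c, M (c, i) (c, k)

/-- Canonical maximally entangled state `τ = (1/d) vec(I)vec(I)*` on `a ⊗ a`. -/
noncomputable def tauGen {a : Type*} [Fintype a] [DecidableEq a] :
    Matrix (a × a) (a × a) ℂ :=
  Matrix.of fun p q =>
    (Fintype.card a : ℂ)⁻¹ * (if p.1 = p.2 then 1 else 0) * (if q.1 = q.2 then 1 else 0)

/-- The operator `τ ⊗ σ` on `a ⊗ (a ⊗ r)`. -/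
noncomputable def tauSigma {a r : Type*} [Fintype a] [DecidableEq a]
    (σ : Matrix r r ℂ) : Matrix (a × (a × r)) (a × (a × r)) ℂ :=
  Matrix.of fun p q => tauGen (p.1, p.2.1) (q.1, q.2.1) * σ p.2.2 q.2.2

/-- Fidelity of two positive semidefinite matrices. -/
noncomputable def fidelity {a : Type*} [Fintype a] [DecidableEq a]
    {P Q : Matrix a a ℂ} (hP : P.PosSemidef) (hQ : Q.PosSemidef) : ℝ :=
  traceNorm (hP.sqrt * hQ.sqrt)

lemma dot_self_re_nonneg {ι : Type*} [Fintype ι] (z : ι → ℂ) : 0 ≤ (dotProduct (star z) z).re := by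
  simp only [dotProduct, Pi.star_apply, Complex.re_sum]
  apply Finset.sum_nonneg
  intro a _
  simpa [Complex.normSq_apply] using Complex.normSq_nonneg (z a)

lemma dot_self_eq_zero {ι : Type*} [Fintype ι] {z : ι → ℂ}
    (h : (dotProduct (star z) z).re = 0) : z = 0 := by
  have h2 : ∀ a ∈ Finset.univ, 0 ≤ ((star (z a)) * z a).re := by
    intro a _; simpa [Complex.normSq_apply] using Complex.normSq_nonneg (z a)
  simp only [dotProduct, Pi.star_apply, Complex.re_sum] at h
  have := (Finset.sum_eq_zero_iff_of_nonneg h2).mp h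
  funext a
  have h5 := this a (Finset.mem_univ a)
  have h6 : (star (z a) * z a) = (Complex.normSq (z a) : ℂ) := by
    rw [mul_comm]; exact Complex.mul_conj _
  rw [h6, Complex.ofReal_re] at h5
  simpa using Complex.normSq_eq_zero.mp h5

lemma dot_comm_re {ι : Type*} [Fintype ι] (v y : ι → ℂ) :
    (dotProduct (star y) v).re = (dotProduct (star v) y).re := by
  have : dotProduct (star y) v = star (dotProduct (star v) y) := by
    simp only [dotProduct, star_sum, star_mul', star_star, Pi.star_apply]
    exact Finset.sum_congr rfl fun a _ => mul_comm _ _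
  rw [this, Complex.star_def, Complex.conj_re]

lemma dot_expand {ι : Type*} [Fintype ι] (v y : ι → ℂ) :
    (dotProduct (star (v - y)) (v - y)).re
      = (dotProduct (star v) v).re + (dotProduct (star y) y).re
        - 2 * (dotProduct (star v) y).re := by
  simp only [star_sub, sub_dotProduct, dotProduct_sub, Complex.sub_re]
  have := dot_comm_re v y
  ring_nf
  rw [this]
  ring
lemma trace_CT_self_zero {m n : Type*} [Fintype m] [Fintype n]
    {M : Matrix m n ℂ} (h : (Mᴴ * M).trace = 0) : M = 0 := by
  have hre : (∑ j, ∑ i, (star (M i j) * M i j).re) = 0 := by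
    have := congrArg Complex.re h
    simpa [Matrix.trace, Matrix.diag, Matrix.mul_apply, Matrix.conjTranspose_apply,
      Complex.re_sum] using this
  have hnn : ∀ j ∈ Finset.univ, 0 ≤ ∑ i, (star (M i j) * M i j).re := by
    intro j _
    apply Finset.sum_nonneg
    intro i _
    have h6 : (star (M i j) * M i j) = (Complex.normSq (M i j) : ℂ) := by
      rw [mul_comm]; exact Complex.mul_conj _
    rw [h6, Complex.ofReal_re]; exact Complex.normSq_nonneg _
  ext i j
  have h1 := (Finset.sum_eq_zero_iff_of_nonneg hnn).mp hre j (Finset.mem_univ j)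
  have hnn2 : ∀ i ∈ Finset.univ, 0 ≤ (star (M i j) * M i j).re := by
    intro i _
    have h6 : (star (M i j) * M i j) = (Complex.normSq (M i j) : ℂ) := by
      rw [mul_comm]; exact Complex.mul_conj _
    rw [h6, Complex.ofReal_re]; exact Complex.normSq_nonneg _
  have h2 := (Finset.sum_eq_zero_iff_of_nonneg hnn2).mp h1 i (Finset.mem_univ i)
  have h6 : (star (M i j) * M i j) = (Complex.normSq (M i j) : ℂ) := by
    rw [mul_comm]; exact Complex.mul_conj _
  rw [h6, Complex.ofReal_re] at h2
  simpa using Complex.normSq_eq_zero.mp h2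

lemma psd_mul_eq_zero {n : Type*} [Fintype n] [DecidableEq n]
    {P Q : Matrix n n ℂ} (hP : P.PosSemidef) (hQ : Q.PosSemidef)
    (h : (P * Q).trace = 0) : P * Q = 0 := by
  set R := hP.sqrt with hRdef
  set T := hQ.sqrt with hTdef
  have hRH : Rᴴ = R := hP.posSemidef_sqrt.1
  have hTH : Tᴴ = T := hQ.posSemidef_sqrt.1
  have hRR : R * R = P := hP.sqrt_mul_self
  have hTT : T * T = Q := hQ.sqrt_mul_self
  have hTR : T * R = 0 := by
    apply trace_CT_self_zero
    have e1 : (T * R)ᴴ * (T * R) = R * (T * (T * R)) := by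
      rw [conjTranspose_mul, hRH, hTH, mul_assoc]
    rw [e1]
    calc (R * (T * (T * R))).trace = ((T * (T * R)) * R).trace := trace_mul_comm _ _
      _ = (T * T * (R * R)).trace := by simp only [mul_assoc]
      _ = (Q * P).trace := by rw [hRR, hTT]
      _ = (P * Q).trace := trace_mul_comm _ _
      _ = 0 := h
  have hRT : R * T = 0 := by
    have := congrArg conjTranspose hTR
    rwa [conjTranspose_mul, hRH, hTH, conjTranspose_zero] at this
  calc P * Q = R * (R * T) * T := by rw [← hRR, ← hTT]; simp only [mul_assoc]
    _ = 0 := by rw [hRT]; simp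

lemma exists_svd {p q : ℕ} (A : Matrix (Fin p) (Fin q) ℂ) :
    ∃ (V : Matrix (Fin q) (Fin q) ℂ) (W : Matrix (Fin p) (Fin q) ℂ) (s : Fin q → ℝ),
      Vᴴ * V = 1 ∧ V * Vᴴ = 1 ∧ (∀ k, 0 ≤ s k) ∧
      Wᴴ * W = Matrix.diagonal (fun k => if s k = 0 then (0:ℂ) else 1) ∧
      A = W * Matrix.diagonal (fun k => (s k : ℂ)) * Vᴴ ∧
      traceNorm A = ∑ k, s k := by
  have hA := Matrix.posSemidef_conjTranspose_mul_self A
  have hH := hA.1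
  set V : Matrix (Fin q) (Fin q) ℂ := (hH.eigenvectorUnitary : Matrix (Fin q) (Fin q) ℂ) with hVdef
  have hVsV : Vᴴ * V = 1 := by
    rw [← Matrix.star_eq_conjTranspose]
    exact Unitary.coe_star_mul_self hH.eigenvectorUnitary
  have hVVs : V * Vᴴ = 1 := by
    rw [← Matrix.star_eq_conjTranspose]
    exact Unitary.coe_mul_star_self hH.eigenvectorUnitary
  set d : Fin q → ℝ := hH.eigenvalues with hddef
  have hd : ∀ k, 0 ≤ d k := fun k => hA.eigenvalues_nonneg k
  set s : Fin q → ℝ := fun k => Real.sqrt (d k) with hsdef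
  have hs : ∀ k, 0 ≤ s k := fun k => Real.sqrt_nonneg _
  have hsd : ∀ k, (s k) ^ 2 = d k := fun k => Real.sq_sqrt (hd k)
  have hs0 : ∀ k, s k = 0 → d k = 0 := by
    intro k h0; rw [← hsd k, h0]; ring
  have hspec : Aᴴ * A = V * Matrix.diagonal (fun k => (d k : ℂ)) * Vᴴ := by
    have := hH.spectral_theorem
    rw [Unitary.conjStarAlgAut_apply, Matrix.star_eq_conjTranspose] at this
    exact this
  set Dc : Matrix (Fin q) (Fin q) ℂ := Matrix.diagonal (fun k => (s k : ℂ)) with hDdef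
  set splus : Matrix (Fin q) (Fin q) ℂ :=
    Matrix.diagonal (fun k => if s k = 0 then 0 else (s k : ℂ)⁻¹) with hpdef
  set M : Matrix (Fin p) (Fin q) ℂ := A * V with hMdef
  set W : Matrix (Fin p) (Fin q) ℂ := M * splus with hWdef
  have hdiagd : Mᴴ * M = Matrix.diagonal (fun k => (d k : ℂ)) := by
    rw [hMdef, conjTranspose_mul]
    calc Vᴴ * Aᴴ * (A * V) = Vᴴ * (V * Matrix.diagonal (fun k => (d k : ℂ)) * Vᴴ) * V := by
          rw [← hspec]; simp only [Matrix.mul_assoc]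
      _ = (Vᴴ * V) * Matrix.diagonal (fun k => (d k : ℂ)) * (Vᴴ * V) := by
          simp only [Matrix.mul_assoc]
      _ = Matrix.diagonal (fun k => (d k : ℂ)) := by rw [hVsV]; simp
  -- columns of M = A * V with d k = 0 vanish
  have hMcol : ∀ k, d k = 0 → ∀ i, M i k = 0 := by
    intro k hk i
    have hMM : (Mᴴ * M) k k = (d k : ℂ) := by rw [hdiagd]; simp
    have hsum : (∑ i, (star (M i k) * M i k)).re = 0 := by
      rw [show (∑ i, (star (M i k) * M i k)) = (Mᴴ * M) k k by
        simp [Matrix.mul_apply, Matrix.conjTranspose_apply]]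
      rw [hMM, hk]; simp
    have hnn : ∀ i ∈ Finset.univ, 0 ≤ (star (M i k) * M i k).re := by
      intro i _
      have h6 : (star (M i k) * M i k) = (Complex.normSq (M i k) : ℂ) := by
        rw [mul_comm]; exact Complex.mul_conj _
      rw [h6, Complex.ofReal_re]; exact Complex.normSq_nonneg _
    rw [Complex.re_sum] at hsum
    have h2 := (Finset.sum_eq_zero_iff_of_nonneg hnn).mp hsum i (Finset.mem_univ i)
    have h6 : (star (M i k) * M i k) = (Complex.normSq (M i k) : ℂ) := by
      rw [mul_comm]; exact Complex.mul_conj _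
    rw [h6, Complex.ofReal_re] at h2
    simpa using Complex.normSq_eq_zero.mp h2
  have hWW : Wᴴ * W = Matrix.diagonal (fun k => if s k = 0 then (0:ℂ) else 1) := by
    have e1 : Wᴴ * W = splusᴴ * (Mᴴ * M) * splus := by
      rw [hWdef, conjTranspose_mul]; simp only [Matrix.mul_assoc]
    rw [e1, hdiagd, hpdef, Matrix.diagonal_conjTranspose,
      Matrix.diagonal_mul_diagonal, Matrix.diagonal_mul_diagonal]
    refine congrArg Matrix.diagonal (funext fun k => ?_)
    by_cases h0 : s k = 0
    · simp [h0]
    · have hdk : (d k : ℂ) = (s k : ℂ) * (s k : ℂ) := by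
        rw [← hsd k]; push_cast; ring
      have hsne : (s k : ℂ) ≠ 0 := by exact_mod_cast h0
      simp only [Function.comp_apply, Pi.star_apply, h0, if_false, star_inv₀,
        Complex.star_def, Complex.conj_ofReal, hdk]
      field_simp
  have hWD : W * Dc = M := by
    have e1 : W * Dc = M * (splus * Dc) := by
      rw [hWdef]; simp only [Matrix.mul_assoc]
    rw [e1, hpdef, hDdef, Matrix.diagonal_mul_diagonal]
    ext i k
    rw [Matrix.mul_diagonal]
    by_cases h0 : s k = 0
    · simp [h0, hMcol k (hs0 k h0) i]
    · have hsne : (s k : ℂ) ≠ 0 := by exact_mod_cast h0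
      simp [h0, hsne]
  have hAeq : A = W * Dc * Vᴴ := by
    rw [hWD, hMdef, Matrix.mul_assoc, hVVs, Matrix.mul_one]
  have hDpsd : Dc.PosSemidef := by
    rw [hDdef]
    apply Matrix.PosSemidef.diagonal
    intro k
    simp only [Pi.zero_apply]
    exact Complex.zero_le_real.mpr (hs k)
  have hsqrt : hA.sqrt = V * Dc * Vᴴ := by
    have hBpsd : (V * Dc * Vᴴ).PosSemidef := hDpsd.mul_mul_conjTranspose_same V
    have hsq : (V * Dc * Vᴴ) ^ 2 = Aᴴ * A := by
      rw [pow_two, hspec]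
      calc V * Dc * Vᴴ * (V * Dc * Vᴴ) = V * (Dc * ((Vᴴ * V) * (Dc * Vᴴ))) := by
            simp only [Matrix.mul_assoc]
        _ = V * (Dc * Dc) * Vᴴ := by rw [hVsV]; simp only [Matrix.one_mul, Matrix.mul_assoc]
        _ = V * Matrix.diagonal (fun k => (d k : ℂ)) * Vᴴ := by
            rw [hDdef, Matrix.diagonal_mul_diagonal]
            refine congrArg (fun X => V * X * Vᴴ) (congrArg Matrix.diagonal (funext fun k => ?_))
            rw [← hsd k]; push_cast; ring
    rfl
  refine ⟨V, W, s, hVsV, hVVs, hs, hWW, by rw [← hDdef, hAeq], ?_⟩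
  rw [traceNorm, hsqrt]
  have : (V * Dc * Vᴴ).trace = Dc.trace := by
    rw [Matrix.trace_mul_cycle, hVsV, Matrix.one_mul]
  rw [this, hDdef, Matrix.trace_diagonal, Complex.re_sum]
  simp
lemma re_dot_le_one {ι : Type*} [Fintype ι] {v y : ι → ℂ}
    (hv : (dotProduct (star v) v).re = 1) (hy : (dotProduct (star y) y).re ≤ 1) :
    (dotProduct (star v) y).re ≤ 1 := by
  have h0 := dot_self_re_nonneg (v - y)
  have h1 := dot_expand v y
  linarith

lemma eq_of_re_dot_eq {ι : Type*} [Fintype ι] {v y : ι → ℂ}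
    (hv : (dotProduct (star v) v).re = 1) (hy : (dotProduct (star y) y).re ≤ 1)
    (hc : (dotProduct (star v) y).re = 1) : y = v := by
  have h0 := dot_self_re_nonneg (v - y)
  have h1 := dot_expand v y
  have h2 : (dotProduct (star (v - y)) (v - y)).re = 0 := by linarith
  have h3 := dot_self_eq_zero h2
  have := sub_eq_zero.mp h3
  exact this.symm

lemma mul_diag_eq_of_cols {n q : Type*} [Fintype n] [Fintype q] [DecidableEq q]
    (X Y : Matrix n q ℂ) (f : q → ℝ)
    (hcol : ∀ k, f k ≠ 0 → ∀ a, X a k = Y a k) :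
    X * Matrix.diagonal (fun k => (f k : ℂ)) = Y * Matrix.diagonal (fun k => (f k : ℂ)) := by
  ext a k
  rw [Matrix.mul_diagonal, Matrix.mul_diagonal]
  by_cases h0 : f k = 0
  · simp [h0]
  · rw [hcol k h0 a]

lemma mul_col_eq_mulVec {m n q : Type*} [Fintype n] (X : Matrix m n ℂ) (Y : Matrix n q ℂ)
    (a : m) (k : q) : (X * Y) a k = (X *ᵥ (fun b => Y b k)) a := by
  simp [Matrix.mul_apply, Matrix.mulVec, dotProduct]

lemma re_real_mul (r : ℝ) (z : ℂ) : ((r : ℂ) * z).re = r * z.re := by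
  simp [Complex.mul_re]

/-- Equality in the triangle inequality for the trace norm over a pairwise orthogonal
family implies `AᵢAⱼ* = 0` and `Aᵢ*Aⱼ = 0` for `i ≠ j`. -/
theorem stmt5 (r p q : ℕ) (A : Fin r → Matrix (Fin p) (Fin q) ℂ)
    (horth : ∀ i j, i ≠ j → ((A i)ᴴ * A j).trace = 0)
    (h : traceNorm (∑ i, A i) = ∑ i, traceNorm (A i)) :
    ∀ i j, i ≠ j → A i * (A j)ᴴ = 0 ∧ (A i)ᴴ * A j = 0 := by
  classical
  obtain ⟨V, W, s, hVsV, hVVs, hs, hWW, hSeq, htn⟩ := exists_svd (∑ i, A i)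
  choose Vi Wi si hVsVi hVVsi hsi hWWi hAeqi htni using fun i => exists_svd (A i)
  set E : Matrix (Fin q) (Fin q) ℂ :=
    Matrix.diagonal (fun k => if s k = 0 then (0:ℂ) else 1) with hEdef
  set U : Matrix (Fin q) (Fin p) ℂ := V * E * Wᴴ with hUdef
  set Dc : Matrix (Fin q) (Fin q) ℂ := Matrix.diagonal (fun k => (s k : ℂ)) with hDdef
  set Di : Fin r → Matrix (Fin q) (Fin q) ℂ :=
    fun i => Matrix.diagonal (fun k => (si i k : ℂ)) with hDidef
  clear_value E U Dc Di
  have hDiapp : ∀ i, Matrix.diagonal (fun k => (si i k : ℂ)) = Di i := fun i => by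
    rw [hDidef]
  have hEE : E * E = E := by
    rw [hEdef, Matrix.diagonal_mul_diagonal]
    refine congrArg Matrix.diagonal (funext fun k => ?_)
    by_cases h0 : s k = 0 <;> simp [h0]
  have hEH : Eᴴ = E := by
    rw [hEdef, Matrix.diagonal_conjTranspose]
    refine congrArg Matrix.diagonal (funext fun k => ?_)
    by_cases h0 : s k = 0 <;> simp [h0]
  have hUs : Uᴴ = W * E * Vᴴ := by
    rw [hUdef, conjTranspose_mul, conjTranspose_mul, conjTranspose_conjTranspose, hEH,
      Matrix.mul_assoc]
  have hUU : Uᴴ * U = W * E * Wᴴ := by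
    rw [hUs, hUdef]
    calc W * E * Vᴴ * (V * E * Wᴴ) = W * (E * ((Vᴴ * V) * (E * Wᴴ))) := by
          simp only [Matrix.mul_assoc]
      _ = W * (E * E) * Wᴴ := by rw [hVsV, Matrix.one_mul]; simp only [Matrix.mul_assoc]
      _ = W * E * Wᴴ := by rw [hEE]
  have hEEX : ∀ (X : Matrix (Fin q) (Fin p) ℂ), E * (E * X) = E * X := fun X => by
    rw [← Matrix.mul_assoc, hEE]
  have hEEY : ∀ (X : Matrix (Fin q) (Fin q) ℂ), E * (E * X) = E * X := fun X => by
    rw [← Matrix.mul_assoc, hEE]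
  have hUUs : U * Uᴴ = V * E * Vᴴ := by
    rw [hUs, hUdef]
    calc V * E * Wᴴ * (W * E * Vᴴ) = V * (E * ((Wᴴ * W) * (E * Vᴴ))) := by
          simp only [Matrix.mul_assoc]
      _ = V * (E * (E * (E * Vᴴ))) := by rw [hWW]
      _ = V * (E * Vᴴ) := by rw [hEEY, hEEY]
      _ = V * E * Vᴴ := by rw [Matrix.mul_assoc]
  -- 1 - UᴴU and 1 - UUᴴ are PSD
  have hproj1 : (Uᴴ * U) * (Uᴴ * U) = Uᴴ * U := by
    rw [hUU]
    calc W * E * Wᴴ * (W * E * Wᴴ) = W * (E * ((Wᴴ * W) * (E * Wᴴ))) := by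
          simp only [Matrix.mul_assoc]
      _ = W * (E * (E * (E * Wᴴ))) := by rw [hWW]
      _ = W * (E * Wᴴ) := by rw [hEEX, hEEX]
      _ = W * E * Wᴴ := by rw [Matrix.mul_assoc]
  have hproj2 : (U * Uᴴ) * (U * Uᴴ) = U * Uᴴ := by
    rw [hUUs]
    calc V * E * Vᴴ * (V * E * Vᴴ) = V * (E * ((Vᴴ * V) * (E * Vᴴ))) := by
          simp only [Matrix.mul_assoc]
      _ = V * (E * (E * Vᴴ)) := by rw [hVsV, Matrix.one_mul]
      _ = V * (E * Vᴴ) := by rw [hEEY]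
      _ = V * E * Vᴴ := by rw [Matrix.mul_assoc]
  have hherm1 : (Uᴴ * U)ᴴ = Uᴴ * U := by
    rw [conjTranspose_mul, conjTranspose_conjTranspose]
  have hherm2 : (U * Uᴴ)ᴴ = U * Uᴴ := by
    rw [conjTranspose_mul, conjTranspose_conjTranspose]
  have hP1 : (1 - Uᴴ * U).PosSemidef := by
    have e : (1 - Uᴴ * U)ᴴ * (1 - Uᴴ * U) = 1 - Uᴴ * U := by
      rw [conjTranspose_sub, conjTranspose_one, hherm1, Matrix.sub_mul, Matrix.mul_sub,
        Matrix.mul_sub, Matrix.one_mul, Matrix.mul_one, Matrix.one_mul, hproj1]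
      abel
    rw [← e]
    exact Matrix.posSemidef_conjTranspose_mul_self _
  have hP2 : (1 - U * Uᴴ).PosSemidef := by
    have e : (1 - U * Uᴴ)ᴴ * (1 - U * Uᴴ) = 1 - U * Uᴴ := by
      rw [conjTranspose_sub, conjTranspose_one, hherm2, Matrix.sub_mul, Matrix.mul_sub,
        Matrix.mul_sub, Matrix.one_mul, Matrix.mul_one, Matrix.one_mul, hproj2]
      abel
    rw [← e]
    exact Matrix.posSemidef_conjTranspose_mul_self _
  -- trace of U * S
  have hEDc : E * Dc = Dc := by
    rw [hEdef, hDdef, Matrix.diagonal_mul_diagonal]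
    refine congrArg Matrix.diagonal (funext fun k => ?_)
    by_cases h0 : s k = 0 <;> simp [h0]
  have hUS : U * (∑ i, A i) = V * Dc * Vᴴ := by
    rw [hSeq, hUdef]
    calc V * E * Wᴴ * (W * Dc * Vᴴ) = V * (E * ((Wᴴ * W) * (Dc * Vᴴ))) := by
          simp only [Matrix.mul_assoc]
      _ = V * (E * (E * (Dc * Vᴴ))) := by rw [hWW]
      _ = V * (E * (Dc * Vᴴ)) := by rw [hEEY]
      _ = V * ((E * Dc) * Vᴴ) := by rw [← Matrix.mul_assoc E Dc]
      _ = V * Dc * Vᴴ := by rw [hEDc, Matrix.mul_assoc]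
  have htrUS : (U * (∑ i, A i)).trace = ∑ k, (s k : ℂ) := by
    rw [hUS, Matrix.trace_mul_cycle, hVsV, Matrix.one_mul, hDdef, Matrix.trace_diagonal]
  -- the diagonal coefficients
  set c : Fin r → Fin q → ℂ := fun i k => ((Vi i)ᴴ * U * Wi i) k k with hcdef
  clear_value c
  have htrUA : ∀ i, (U * A i).trace = ∑ k, (si i k : ℂ) * c i k := by
    intro i
    conv_lhs => rw [hAeqi i]
    rw [show U * (Wi i * Matrix.diagonal (fun k => (si i k : ℂ)) * (Vi i)ᴴ)
        = (U * Wi i * Matrix.diagonal (fun k => (si i k : ℂ))) * (Vi i)ᴴ by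
      simp only [Matrix.mul_assoc]]
    rw [Matrix.trace_mul_comm]
    rw [show (Vi i)ᴴ * (U * Wi i * Matrix.diagonal (fun k => (si i k : ℂ)))
        = ((Vi i)ᴴ * U * Wi i) * Matrix.diagonal (fun k => (si i k : ℂ)) by
      simp only [Matrix.mul_assoc]]
    rw [Matrix.trace]
    refine Finset.sum_congr rfl fun k _ => ?_
    rw [Matrix.diag_apply, Matrix.mul_diagonal, hcdef, mul_comm]
  -- vector facts
  have hcv : ∀ i k, c i k
      = dotProduct (star (fun a => Vi i a k)) (U *ᵥ (fun b => Wi i b k)) := by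
    intro i k
    rw [hcdef]
    simp only [Matrix.mul_assoc]
    simp [Matrix.mul_apply, Matrix.conjTranspose_apply, Matrix.mulVec, dotProduct]
  have hvv : ∀ i k, (dotProduct (star (fun a => Vi i a k)) (fun a => Vi i a k)) = 1 := by
    intro i k
    have e := congrFun (congrFun (hVsVi i) k) k
    rw [Matrix.one_apply_eq] at e
    rw [← e]
    simp [Matrix.mul_apply, Matrix.conjTranspose_apply, dotProduct]
  have hxx : ∀ i k, (dotProduct (star (fun a => Wi i a k)) (fun a => Wi i a k))
      = if si i k = 0 then (0:ℂ) else 1 := by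
    intro i k
    have e := congrFun (congrFun (hWWi i) k) k
    rw [Matrix.diagonal_apply_eq] at e
    rw [← e]
    simp [Matrix.mul_apply, Matrix.conjTranspose_apply, dotProduct]
  -- norm of U *ᵥ x bounded by norm of x
  have hcontr : ∀ x : Fin p → ℂ,
      (dotProduct (star (U *ᵥ x)) (U *ᵥ x)).re ≤ (dotProduct (star x) x).re := by
    intro x
    have e : dotProduct (star (U *ᵥ x)) (U *ᵥ x)
        = dotProduct (star x) ((Uᴴ * U) *ᵥ x) := by
      rw [star_mulVec]
      simp [Matrix.dotProduct_mulVec, Matrix.vecMul_vecMul]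
    have hle := hP1.dotProduct_mulVec_nonneg x
    rw [Matrix.sub_mulVec, Matrix.one_mulVec, dotProduct_sub] at hle
    have := (Complex.le_def.mp hle).1
    simp only [Complex.zero_re, Complex.sub_re] at this
    rw [e]; linarith
  have hcontr' : ∀ v : Fin q → ℂ,
      (dotProduct (star (Uᴴ *ᵥ v)) (Uᴴ *ᵥ v)).re ≤ (dotProduct (star v) v).re := by
    intro v
    have e : dotProduct (star (Uᴴ *ᵥ v)) (Uᴴ *ᵥ v)
        = dotProduct (star v) ((U * Uᴴ) *ᵥ v) := by
      rw [star_mulVec, conjTranspose_conjTranspose]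
      simp [Matrix.dotProduct_mulVec, Matrix.vecMul_vecMul]
    have hle := hP2.dotProduct_mulVec_nonneg v
    rw [Matrix.sub_mulVec, Matrix.one_mulVec, dotProduct_sub] at hle
    have := (Complex.le_def.mp hle).1
    simp only [Complex.zero_re, Complex.sub_re] at this
    rw [e]; linarith
  have hxle : ∀ i k, (dotProduct (star (fun a => Wi i a k)) (fun a => Wi i a k)).re ≤ 1 := by
    intro i k
    rw [hxx i k]
    by_cases h0 : si i k = 0 <;> simp [h0]
  have hyle : ∀ i k,
      (dotProduct (star (U *ᵥ (fun b => Wi i b k))) (U *ᵥ (fun b => Wi i b k))).re ≤ 1 := by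
    intro i k
    exact le_trans (hcontr _) (hxle i k)
  have hre_le : ∀ i k, (c i k).re ≤ 1 := by
    intro i k
    rw [hcv i k]
    refine re_dot_le_one ?_ (hyle i k)
    rw [hvv i k]; simp
  -- global equality forces termwise equality
  have hsum_eq : ∑ i, ∑ k, si i k * (c i k).re = ∑ i, ∑ k, si i k := by
    have e1 : (U * (∑ i, A i)).trace = ∑ i, (U * A i).trace := by
      rw [Matrix.mul_sum]
      exact Matrix.trace_sum _ _
    have e2 : (∑ k, (s k : ℂ)).re = ∑ i, ∑ k, si i k * (c i k).re := by
      rw [← htrUS, e1]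
      rw [show (∑ i, (U * A i).trace) = ∑ i, ∑ k, (si i k : ℂ) * c i k from
        Finset.sum_congr rfl fun i _ => htrUA i]
      rw [Complex.re_sum]
      refine Finset.sum_congr rfl fun i _ => ?_
      rw [Complex.re_sum]
      exact Finset.sum_congr rfl fun k _ => re_real_mul _ _
    have e3 : (∑ k, (s k : ℂ)).re = ∑ k, s k := by rw [Complex.re_sum]; simp
    have e4 : (∑ k, s k) = ∑ i, ∑ k, si i k := by
      rw [← htn, h]
      exact Finset.sum_congr rfl fun i _ => htni i
    rw [← e2, e3, e4]
  have hgnn : ∀ i k, 0 ≤ si i k * (1 - (c i k).re) := fun i k =>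
    mul_nonneg (hsi i k) (by linarith [hre_le i k])
  have hg0 : ∑ i, ∑ k, si i k * (1 - (c i k).re) = 0 := by
    have e : ∑ i, ∑ k, si i k * (1 - (c i k).re)
        = (∑ i, ∑ k, si i k) - ∑ i, ∑ k, si i k * (c i k).re := by
      rw [← Finset.sum_sub_distrib]
      refine Finset.sum_congr rfl fun i _ => ?_
      rw [← Finset.sum_sub_distrib]
      refine Finset.sum_congr rfl fun k _ => ?_
      ring
    rw [e, hsum_eq, sub_self]
  have hterm : ∀ i k, si i k ≠ 0 → (c i k).re = 1 := by
    intro i k hne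
    have houter := (Finset.sum_eq_zero_iff_of_nonneg
      (fun i _ => Finset.sum_nonneg fun k _ => hgnn i k)).mp hg0 i (Finset.mem_univ i)
    have hinner := (Finset.sum_eq_zero_iff_of_nonneg
      (fun k _ => hgnn i k)).mp houter k (Finset.mem_univ k)
    have := mul_eq_zero.mp hinner
    rcases this with h1 | h2
    · exact absurd h1 hne
    · linarith
  have hkey1 : ∀ i k, si i k ≠ 0 →
      U *ᵥ (fun b => Wi i b k) = (fun a => Vi i a k) := by
    intro i k hne
    refine eq_of_re_dot_eq ?_ (hyle i k) ?_
    · rw [hvv i k]; simp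
    · rw [← hcv i k]; exact hterm i k hne
  have hkey2 : ∀ i k, si i k ≠ 0 →
      Uᴴ *ᵥ (fun a => Vi i a k) = (fun b => Wi i b k) := by
    intro i k hne
    refine eq_of_re_dot_eq ?_ ?_ ?_
    · rw [hxx i k]; simp [hne]
    · refine le_trans (hcontr' _) ?_
      rw [hvv i k]; simp
    · have e : dotProduct (star (fun b => Wi i b k)) (Uᴴ *ᵥ (fun a => Vi i a k))
          = dotProduct (star (U *ᵥ (fun b => Wi i b k))) (fun a => Vi i a k) := by
        rw [Matrix.dotProduct_mulVec, ← star_mulVec]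
      rw [e, dot_comm_re (fun a => Vi i a k) (U *ᵥ (fun b => Wi i b k)), ← hcv i k]
      exact hterm i k hne
  -- matrix identities
  have hUWD : ∀ i, U * Wi i * Di i = Vi i * Di i := by
    intro i
    rw [hDidef]
    refine mul_diag_eq_of_cols _ _ (si i) fun k hk a => ?_
    rw [mul_col_eq_mulVec, hkey1 i k hk]
  have hUVD : ∀ i, Uᴴ * Vi i * Di i = Wi i * Di i := by
    intro i
    rw [hDidef]
    refine mul_diag_eq_of_cols _ _ (si i) fun k hk a => ?_
    rw [mul_col_eq_mulVec, hkey2 i k hk]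
  have hDiH : ∀ i, (Di i)ᴴ = Di i := by
    intro i
    rw [hDidef, Matrix.diagonal_conjTranspose]
    refine congrArg Matrix.diagonal (funext fun k => ?_)
    simp [Complex.star_def, Complex.conj_ofReal]
  have hAH : ∀ i, (A i)ᴴ = Vi i * Di i * (Wi i)ᴴ := by
    intro i
    rw [hAeqi i, hDiapp i, conjTranspose_mul, conjTranspose_mul, conjTranspose_conjTranspose,
      hDiH]
    simp only [Matrix.mul_assoc]
  have hUA : ∀ i, U * A i = Vi i * Di i * (Vi i)ᴴ := by
    intro i
    rw [hAeqi i, hDiapp i]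
    calc U * (Wi i * Di i * (Vi i)ᴴ) = (U * Wi i * Di i) * (Vi i)ᴴ := by
          simp only [Matrix.mul_assoc]
      _ = Vi i * Di i * (Vi i)ᴴ := by rw [hUWD i]
  have hUAH : ∀ i, Uᴴ * (A i)ᴴ = Wi i * Di i * (Wi i)ᴴ := by
    intro i
    rw [hAH i]
    calc Uᴴ * (Vi i * Di i * (Wi i)ᴴ) = (Uᴴ * Vi i * Di i) * (Wi i)ᴴ := by
          simp only [Matrix.mul_assoc]
      _ = Wi i * Di i * (Wi i)ᴴ := by rw [hUVD i]
  have hrec1 : ∀ i, Uᴴ * (U * A i) = A i := by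
    intro i
    rw [hUA i]
    calc Uᴴ * (Vi i * Di i * (Vi i)ᴴ) = (Uᴴ * Vi i * Di i) * (Vi i)ᴴ := by
          simp only [Matrix.mul_assoc]
      _ = Wi i * Di i * (Vi i)ᴴ := by rw [hUVD i]
      _ = A i := by rw [hAeqi i, hDiapp i]
  have hrec2 : ∀ i, U * (Uᴴ * (A i)ᴴ) = (A i)ᴴ := by
    intro i
    rw [hUAH i]
    calc U * (Wi i * Di i * (Wi i)ᴴ) = (U * Wi i * Di i) * (Wi i)ᴴ := by
          simp only [Matrix.mul_assoc]
      _ = Vi i * Di i * (Wi i)ᴴ := by rw [hUWD i]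
      _ = (A i)ᴴ := (hAH i).symm
  have hDipsd : ∀ i, (Di i).PosSemidef := by
    intro i
    rw [hDidef]
    apply Matrix.PosSemidef.diagonal
    intro k
    simp only [Pi.zero_apply]
    exact Complex.zero_le_real.mpr (hsi i k)
  have hPpsd : ∀ i, (Vi i * Di i * (Vi i)ᴴ).PosSemidef :=
    fun i => (hDipsd i).mul_mul_conjTranspose_same (Vi i)
  have hQpsd : ∀ i, (Wi i * Di i * (Wi i)ᴴ).PosSemidef :=
    fun i => (hDipsd i).mul_mul_conjTranspose_same (Wi i)
  intro i j hij
  constructor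
  · -- A i * (A j)ᴴ = 0
    have hAiU : A i * U = Wi i * Di i * (Wi i)ᴴ := by
      have e2 := congrArg conjTranspose (hUAH i)
      rw [conjTranspose_mul, conjTranspose_conjTranspose, conjTranspose_conjTranspose,
        (hQpsd i).1] at e2
      exact e2
    have e : A i * (A j)ᴴ = (Wi i * Di i * (Wi i)ᴴ) * (Wi j * Di j * (Wi j)ᴴ) := by
      conv_lhs => rw [← hrec2 j]
      rw [← Matrix.mul_assoc, hAiU, hUAH j]
    have htr : ((Wi i * Di i * (Wi i)ᴴ) * (Wi j * Di j * (Wi j)ᴴ)).trace = 0 := by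
      rw [← e, Matrix.trace_mul_comm]
      exact horth j i (Ne.symm hij)
    rw [e]
    exact psd_mul_eq_zero (hQpsd i) (hQpsd j) htr
  · -- (A i)ᴴ * A j = 0
    have e : (A i)ᴴ * A j = (Vi i * Di i * (Vi i)ᴴ) * (Vi j * Di j * (Vi j)ᴴ) := by
      conv_lhs => rw [← hrec1 j]
      rw [← Matrix.mul_assoc, ← conjTranspose_mul, hUA i, (hPpsd i).1, hUA j]
    have htr : ((Vi i * Di i * (Vi i)ᴴ) * (Vi j * Di j * (Vi j)ᴴ)).trace = 0 := by
      rw [← e]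
      exact horth i j hij
    rw [e]
    exact psd_mul_eq_zero (hPpsd i) (hPpsd j) htr
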